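/- Let v₁, v₂ ∈ ℍ(ℚ) be linearly independent over ℚ, set a₁ = a₁(v₁,v₂), a₂ = a₂(v₁,v₂), and let g ∈ ℍ(ℚ) be nonzero with a₂·g = g·a₁. Let α, β ∈ ℍ(ℚ) satisfy Nr(α) = Nr(β) = 1. Then α·x·conj β = x for all x ∈ ℍ(ℚ) satisfying a₁·x = −x·a₂ if and only if α·a₁ = a₁·α and β·g = g·conj α. -/

import Mathlib

open Quaternion

/-- If `a ≠ 0`, `p` is pure and commutes with `a`, and `y` anticommutes with `a`,
then `p` anticommutes with `y`. -/
lemma aux_anticomm (a p y : ℍ[ℚ]) (ha : a ≠ 0) (hsp : star p = -p)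
    (hpa : p * a = a * p) (hy : a * y = -(y * a)) : p * y = -(y * p) := by
  set q : ℍ[ℚ] := p * y + y * p with hq
  have hA : a * q = -(q * a) := by
    have h1 : a * (p * y) = -((p * y) * a) := by
      calc a * (p * y) = (a * p) * y := by rw [mul_assoc]
        _ = (p * a) * y := by rw [hpa]
        _ = p * (a * y) := by rw [mul_assoc]
        _ = p * (-(y * a)) := by rw [hy]
        _ = -((p * y) * a) := by rw [mul_neg, mul_assoc]
    have h2 : a * (y * p) = -((y * p) * a) := by
      calc a * (y * p) = (a * y) * p := by rw [mul_assoc]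
        _ = (-(y * a)) * p := by rw [hy]
        _ = -(y * (a * p)) := by rw [neg_mul, mul_assoc]
        _ = -(y * (p * a)) := by rw [hpa]
        _ = -((y * p) * a) := by rw [mul_assoc]
    calc a * q = a * (p * y) + a * (y * p) := by rw [hq, mul_add]
      _ = -((p * y) * a) + -((y * p) * a) := by rw [h1, h2]
      _ = -(q * a) := by rw [hq, add_mul, neg_add]
  have hsum : p * y.im + y.im * p = Quaternion.coe (2 * (p * y.im).re) := by
    have hst : star (p * y.im) = y.im * p := by
      have him : star y.im = -y.im := Quaternion.star_eq_neg.mpr (Quaternion.re_im y)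
      rw [star_mul, hsp, him, neg_mul, mul_neg, neg_neg]
    calc p * y.im + y.im * p = p * y.im + star (p * y.im) := by rw [hst]
      _ = Quaternion.coe (2 * (p * y.im).re) := by rw [Quaternion.star_eq_two_re_sub]; abel
  have hdecomp : q = Quaternion.coe (2 * (p * y.im).re) + Quaternion.coe (2 * y.re) * p := by
    calc q = p * (Quaternion.coe y.re + y.im) + (Quaternion.coe y.re + y.im) * p := by
          rw [hq, Quaternion.re_add_im]
      _ = (p * Quaternion.coe y.re + Quaternion.coe y.re * p) + (p * y.im + y.im * p) := by
          noncomm_ring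
      _ = (Quaternion.coe y.re * p + Quaternion.coe y.re * p) + (p * y.im + y.im * p) := by
          rw [Quaternion.coe_commutes]
      _ = Quaternion.coe (2 * (p * y.im).re) + Quaternion.coe (2 * y.re) * p := by
          rw [hsum, show (2 * y.re : ℚ) = y.re + y.re from two_mul _, Quaternion.coe_add,
            add_mul]; abel
  have hB : a * q = q * a := by
    rw [hdecomp]
    calc a * (Quaternion.coe (2 * (p * y.im).re) + Quaternion.coe (2 * y.re) * p)
        = a * Quaternion.coe (2 * (p * y.im).re) + Quaternion.coe (2 * y.re) * (a * p) := by
          rw [mul_add, ← mul_assoc, ← mul_assoc, Quaternion.coe_commutes]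
      _ = Quaternion.coe (2 * (p * y.im).re) * a + Quaternion.coe (2 * y.re) * (p * a) := by
          rw [← Quaternion.coe_commutes, ← hpa]
      _ = (Quaternion.coe (2 * (p * y.im).re) + Quaternion.coe (2 * y.re) * p) * a := by
          rw [add_mul, mul_assoc]
  have hq0 : q = 0 := by
    have h2 : q * a + q * a = 0 := by
      have h3 := hA.symm.trans hB
      rw [neg_eq_iff_add_eq_zero] at h3
      exact h3
    have hqa : q * a = 0 := by
      have h3 : (2 : ℚ) • (q * a) = 0 := by rw [two_smul]; exact h2
      rcases smul_eq_zero.mp h3 with h | h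
      · exact absurd h (by norm_num)
      · exact h
    rcases mul_eq_zero.mp hqa with h | h
    · exact h
    · exact absurd h ha
  exact eq_neg_of_add_eq_zero_left hq0

/-- If `a` is nonzero, `α` commutes with `a`, and `y` anticommutes with `a`,
then `α * y = y * star α`. -/
lemma aux_conj (a α y : ℍ[ℚ]) (ha : a ≠ 0)
    (hc : α * a = a * α) (hy : a * y = -(y * a)) : α * y = y * star α := by
  have hsp : star α.im = -α.im := Quaternion.star_eq_neg.mpr (Quaternion.re_im α)
  have hpa : α.im * a = a * α.im := by
    have h1 : Quaternion.coe α.re * a + α.im * a = a * Quaternion.coe α.re + a * α.im := by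
      rw [← add_mul, ← mul_add, Quaternion.re_add_im]; exact hc
    rw [Quaternion.coe_commutes] at h1
    exact add_left_cancel h1
  have hanti := aux_anticomm a α.im y ha hsp hpa hy
  have hstar : star α = Quaternion.coe α.re - α.im := by
    rw [Quaternion.star_eq_two_re_sub, two_mul, Quaternion.coe_add]
    nth_rewrite 3 [← Quaternion.re_add_im α]
    abel
  calc α * y = (Quaternion.coe α.re + α.im) * y := by rw [Quaternion.re_add_im]
    _ = Quaternion.coe α.re * y + α.im * y := add_mul _ _ _
    _ = y * Quaternion.coe α.re + -(y * α.im) := by rw [Quaternion.coe_commutes, hanti]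
    _ = y * (Quaternion.coe α.re - α.im) := by rw [mul_sub]; abel
    _ = y * star α := by rw [hstar]

theorem stmt_6 (v₁ v₂ : ℍ[ℚ]) (hli : LinearIndependent ℚ ![v₁, v₂])
    (g : ℍ[ℚ]) (hg : g ≠ 0)
    (hg2 : (star v₂ * v₁).im * g = g * (v₁ * star v₂).im)
    (α β : ℍ[ℚ]) (hα : Quaternion.normSq α = 1) (hβ : Quaternion.normSq β = 1) :
    (∀ x : ℍ[ℚ], (v₁ * star v₂).im * x = -(x * (star v₂ * v₁).im) → α * x * star β = x) ↔
      (α * (v₁ * star v₂).im = (v₁ * star v₂).im * α ∧ β * g = g * star α) := by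
  set a : ℍ[ℚ] := (v₁ * star v₂).im with ha_def
  set b : ℍ[ℚ] := (star v₂ * v₁).im with hb_def
  -- basic facts
  rw [linearIndependent_fin2] at hli
  simp only [Matrix.cons_val_one, Matrix.head_cons, Matrix.cons_val_zero] at hli
  obtain ⟨hv₂, hnd⟩ := hli
  have him_sub : ∀ q : ℍ[ℚ], q.im = q - Quaternion.coe q.re := fun q => by
    rw [eq_sub_iff_add_eq, add_comm]; exact q.re_add_im
  have hre_comm : (v₁ * star v₂).re = (star v₂ * v₁).re := by
    simp [Quaternion.re_mul]; ring
  -- key : a * v₁ = v₁ * b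
  have key : a * v₁ = v₁ * b := by
    rw [ha_def, hb_def, him_sub (v₁ * star v₂), him_sub (star v₂ * v₁)]
    rw [sub_mul, mul_sub, mul_assoc, hre_comm, Quaternion.coe_commutes]
  -- a ≠ 0
  have ha0 : a ≠ 0 := by
    intro h
    have h1 : v₁ * star v₂ = Quaternion.coe ((v₁ * star v₂).re) := by
      have h5 := him_sub (v₁ * star v₂)
      rw [← ha_def, h] at h5
      exact sub_eq_zero.mp h5.symm
    set n : ℚ := normSq v₂ with hn_def
    have hn : n ≠ 0 := by
      rw [hn_def]
      exact Quaternion.normSq_ne_zero.mpr hv₂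
    set r : ℚ := (v₁ * star v₂).re with hr_def
    have h2 : Quaternion.coe n * v₁ = Quaternion.coe r * v₂ := by
      calc Quaternion.coe n * v₁ = v₁ * Quaternion.coe n := Quaternion.coe_commutes n v₁
        _ = v₁ * (star v₂ * v₂) := by rw [hn_def, Quaternion.star_mul_self]
        _ = (v₁ * star v₂) * v₂ := by rw [mul_assoc]
        _ = Quaternion.coe r * v₂ := by rw [h1, hr_def]
    have h3 : v₁ = (n⁻¹ * r) • v₂ := by
      have h4 := congrArg (fun z => Quaternion.coe n⁻¹ * z) h2
      rw [← mul_assoc, ← mul_assoc, ← Quaternion.coe_mul, ← Quaternion.coe_mul,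
        inv_mul_cancel₀ hn, Quaternion.coe_one, one_mul, Quaternion.coe_mul_eq_smul] at h4
      exact h4
    exact hnd (n⁻¹ * r) h3.symm
  have ha_re : a.re = 0 := by rw [ha_def]; exact Quaternion.re_im _
  -- existence of a nonzero p anticommuting with a
  obtain ⟨p, hp0, hpa⟩ : ∃ p : ℍ[ℚ], p ≠ 0 ∧ p * a = -(a * p) := by
    by_cases hIJ : a.imI = 0 ∧ a.imJ = 0
    · refine ⟨⟨0,1,0,0⟩, ?_, ?_⟩
      · intro h
        have := congrArg QuaternionAlgebra.imI h
        simp at this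
      · have haK : a = ⟨0,0,0,a.imK⟩ := by
          ext <;> simp [ha_re, hIJ.1, hIJ.2]
        rw [haK]
        ext <;> erw [QuaternionAlgebra.mk_mul_mk, QuaternionAlgebra.mk_mul_mk] <;> erw [QuaternionAlgebra.neg_mk] <;> simp <;> ring
    · refine ⟨⟨0, -a.imJ, a.imI, 0⟩, ?_, ?_⟩
      · intro h
        apply hIJ
        constructor
        · have := congrArg QuaternionAlgebra.imJ h
          simpa using this
        · have := congrArg QuaternionAlgebra.imI h
          simpa using this
      · have haa : a = ⟨0, a.imI, a.imJ, a.imK⟩ := by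
          ext <;> simp [ha_re]
        nth_rewrite 3 4 [haa]
        ext <;> erw [QuaternionAlgebra.mk_mul_mk, QuaternionAlgebra.mk_mul_mk] <;> erw [QuaternionAlgebra.neg_mk] <;> simp <;> ring
  -- star β * β = 1 and β * star β = 1
  have hβ1 : star β * β = 1 := by
    rw [Quaternion.star_mul_self, hβ, Quaternion.coe_one]
  have hβ2 : β * star β = 1 := by
    rw [Quaternion.self_mul_star, hβ, Quaternion.coe_one]
  constructor
  · -- forward : H → commuting conditions
    intro H
    obtain ⟨x, hx_def⟩ : ∃ x : ℍ[ℚ], x = p * v₁ := ⟨_, rfl⟩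
    have hx : x ≠ 0 := by
      rw [hx_def]
      exact mul_ne_zero hp0 (fun h => hnd 0 (by simp [h]))
    have hap : a * p = -(p * a) := by rw [hpa, neg_neg]
    have hxV : a * x = -(x * b) := by
      rw [hx_def]
      calc a * (p * v₁) = (a * p) * v₁ := by rw [mul_assoc]
        _ = -((p * a) * v₁) := by rw [hap, neg_mul]
        _ = -(p * (a * v₁)) := by rw [mul_assoc]
        _ = -(p * (v₁ * b)) := by rw [key]
        _ = -((p * v₁) * b) := by rw [mul_assoc]
    have h1 : α * x * star β = x := H x hxV
    have haxV : a * (a * x) = -((a * x) * b) := by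
      calc a * (a * x) = a * -(x * b) := by rw [hxV]
        _ = -((a * x) * b) := by rw [mul_neg, mul_assoc]
    have h2 : α * (a * x) * star β = a * x := H (a * x) haxV
    -- from h1 : α * x = x * β
    have e1 : α * x = x * β := by
      have := congrArg (fun z => z * β) h1
      rw [mul_assoc (α * x), hβ1, mul_one] at this
      exact this
    have e2 : α * (a * x) = (a * x) * β := by
      have := congrArg (fun z => z * β) h2
      rw [mul_assoc (α * (a * x)), hβ1, mul_one] at this
      exact this
    have hc : α * a = a * α := by
      have e3 : (α * a) * x = (a * α) * x := by
        calc (α * a) * x = α * (a * x) := by rw [mul_assoc]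
          _ = (a * x) * β := e2
          _ = a * (x * β) := by rw [mul_assoc]
          _ = a * (α * x) := by rw [e1]
          _ = (a * α) * x := by rw [mul_assoc]
      exact mul_right_cancel₀ hx e3
    refine ⟨hc, ?_⟩
    -- z = x * g anticommutes with a
    have hz : a * (x * g) = -((x * g) * a) := by
      calc a * (x * g) = (a * x) * g := by rw [mul_assoc]
        _ = -((x * b) * g) := by rw [hxV, neg_mul]
        _ = -(x * (b * g)) := by rw [mul_assoc]
        _ = -(x * (g * a)) := by rw [hg2]
        _ = -((x * g) * a) := by rw [mul_assoc]
    have hconj := aux_conj a α (x * g) ha0 hc hz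
    have e4 : x * (β * g) = x * (g * star α) := by
      calc x * (β * g) = (x * β) * g := by rw [mul_assoc]
        _ = (α * x) * g := by rw [e1]
        _ = α * (x * g) := by rw [mul_assoc]
        _ = (x * g) * star α := hconj
        _ = x * (g * star α) := by rw [mul_assoc]
    exact mul_left_cancel₀ hx e4
  · -- backward
    rintro ⟨hc, hb⟩ x hxV
    have hz : a * (x * g) = -((x * g) * a) := by
      calc a * (x * g) = (a * x) * g := by rw [mul_assoc]
        _ = -((x * b) * g) := by rw [hxV, neg_mul]
        _ = -(x * (b * g)) := by rw [mul_assoc]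
        _ = -(x * (g * a)) := by rw [hg2]
        _ = -((x * g) * a) := by rw [mul_assoc]
    have hc' : α * a = a * α := hc
    have hconj := aux_conj a α (x * g) ha0 hc' hz
    have e1 : (α * x) * g = (x * β) * g := by
      calc (α * x) * g = α * (x * g) := by rw [mul_assoc]
        _ = (x * g) * star α := hconj
        _ = x * (g * star α) := by rw [mul_assoc]
        _ = x * (β * g) := by rw [hb]
        _ = (x * β) * g := by rw [mul_assoc]
    have e2 : α * x = x * β := mul_right_cancel₀ hg e1
    calc α * x * star β = (x * β) * star β := by rw [e2]
      _ = x * (β * star β) := by rw [mul_assoc]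
      _ = x := by rw [hβ2, mul_one]
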